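/- arXiv:2007.15265 — 4 statements merged into one kernel-verified Lean document; each statement's English description precedes it below -/
import Mathlib

section
/- Let x ∈ ℝ^J with x ≥ 0 and let w, w̄ ∈ ℝ^J. Suppose u = Π_{[0,x]}(u − w) and ū = Π_{[0,x]}(ū − w̄). Then there exists a diagonal matrix D = diag(d_1,...,d_J) with 0 ≤ d_i ≤ 1 such that (I − D)(u − ū) + D(w − w̄) = 0. -/
/-- Scalar obstacle inequality for projection onto `[0,x]`. -/
lemma proj_key (x z z' : ℝ) (hx : 0 ≤ x) :
    (min (max z 0) x - min (max z' 0) x) *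
      ((z - min (max z 0) x) - (z' - min (max z' 0) x)) ≥ 0 := by
  rcases le_total z 0 with h1 | h1 <;> rcases le_total z x with h2 | h2 <;>
    rcases le_total z' 0 with h3 | h3 <;> rcases le_total z' x with h4 | h4 <;>
    simp [max_eq_left, max_eq_right, min_eq_left, min_eq_right, *] <;>
    nlinarith [mul_self_nonneg (z - z')]

/-- For `a*b ≤ 0` and `a ≠ 0` the coefficient `a/(a-b)` lies in `[0,1]` and
kills the convex combination. -/
lemma scalar_key (a b : ℝ) (hab : a * b ≤ 0) (h : a ≠ 0) :
    0 ≤ a / (a - b) ∧ a / (a - b) ≤ 1 ∧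
      (1 - a / (a - b)) * a + (a / (a - b)) * b = 0 := by
  have hden : 0 < a * (a - b) := by
    rcases lt_or_gt_of_ne h with h' | h' <;> nlinarith
  have hd : a - b ≠ 0 := fun h0 => by rw [h0] at hden; simp at hden
  refine ⟨?_, ?_, by field_simp; ring⟩
  · rcases lt_or_gt_of_ne h with h' | h'
    · exact div_nonneg_iff.mpr (Or.inr ⟨h'.le, by nlinarith⟩)
    · exact div_nonneg h'.le (by nlinarith)
  · rw [div_le_one_iff]
    rcases lt_or_gt_of_ne h with h' | h'
    · right; right; constructor <;> nlinarith
    · left; constructor <;> nlinarith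

/-- if `u = Π_{[0,x]}(u − w)` and `ū = Π_{[0,x]}(ū − w̄)` (with
`Π_{[0,x]}(z)_i = min (max (z i) 0) (x i)` and `x ≥ 0`), then there is a diagonal
matrix `D = diag(d)` with `0 ≤ d i ≤ 1` such that `(I − D)(u − ū) + D(w − w̄) = 0`. -/
theorem stmt5 {J : ℕ} (x u ubar w wbar : Fin J → ℝ) (hx : ∀ i, 0 ≤ x i)
    (hu : ∀ i, u i = min (max (u i - w i) 0) (x i))
    (hubar : ∀ i, ubar i = min (max (ubar i - wbar i) 0) (x i)) :
    ∃ d : Fin J → ℝ, (∀ i, 0 ≤ d i ∧ d i ≤ 1) ∧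
      ∀ i, (1 - d i) * (u i - ubar i) + d i * (w i - wbar i) = 0 := by
  have hab : ∀ i, (u i - ubar i) * (w i - wbar i) ≤ 0 := by
    intro i
    have := proj_key (x i) (u i - w i) (ubar i - wbar i) (hx i)
    rw [← hu i, ← hubar i] at this
    nlinarith
  refine ⟨fun i => if h : u i - ubar i = 0 then 0 else
      (u i - ubar i) / ((u i - ubar i) - (w i - wbar i)), fun i => ?_, fun i => ?_⟩
  · by_cases h : u i - ubar i = 0
    · simp [h]
    · obtain ⟨h1, h2, _⟩ := scalar_key _ _ (hab i) h
      simp [h, h1, h2]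
  · by_cases h : u i - ubar i = 0
    · simp [h]
    · obtain ⟨_, _, h3⟩ := scalar_key _ _ (hab i) h
      simpa [h] using h3
end

section
/- Let A ∈ ℝ^{J×J} be symmetric positive definite and let D = diag(d_1,...,d_J) with 0 ≤ d_i ≤ 1. Then the matrix I − D + DA is nonsingular and ‖(I − D + DA)^{-1} D‖ ≤ ‖A^{-1}‖, where ‖·‖ is the spectral (operator 2-) norm. -/
open Matrix

/-- Euclidean norm of a vector in `ℝ^J`. -/
noncomputable def sqnorm {J : ℕ} (v : Fin J → ℝ) : ℝ := Real.sqrt (∑ i, (v i)^2)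

/-- Spectral (operator 2-) norm of a matrix. -/
noncomputable def spec {J : ℕ} (A : Matrix (Fin J) (Fin J) ℝ) : ℝ :=
  sSup {c | ∃ v : Fin J → ℝ, sqnorm v ≤ 1 ∧ c = sqnorm (A.mulVec v)}

lemma sqnorm_nonneg {J : ℕ} (v : Fin J → ℝ) : 0 ≤ sqnorm v := Real.sqrt_nonneg _

lemma sq_sqnorm {J : ℕ} (v : Fin J → ℝ) : sqnorm v ^ 2 = ∑ i, (v i)^2 :=
  Real.sq_sqrt (Finset.sum_nonneg fun i _ => sq_nonneg _)

lemma sqnorm_zero {J : ℕ} : sqnorm (0 : Fin J → ℝ) = 0 := by simp [sqnorm]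

lemma dot_le_sqnorm {J : ℕ} (u v : Fin J → ℝ) :
    (∑ i, u i * v i) ≤ sqnorm u * sqnorm v := by
  have h := Finset.sum_mul_sq_le_sq_mul_sq Finset.univ u v
  calc (∑ i, u i * v i) ≤ Real.sqrt ((∑ i, u i * v i)^2) := by
        rw [Real.sqrt_sq_eq_abs]; exact le_abs_self _
    _ ≤ Real.sqrt ((∑ i, (u i)^2) * (∑ i, (v i)^2)) := Real.sqrt_le_sqrt h
    _ = sqnorm u * sqnorm v := by
        rw [Real.sqrt_mul (Finset.sum_nonneg fun i _ => sq_nonneg _)]; rfl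

lemma sqnorm_smul {J : ℕ} (c : ℝ) (v : Fin J → ℝ) :
    sqnorm (c • v) = |c| * sqnorm v := by
  unfold sqnorm
  rw [← Real.sqrt_sq_eq_abs, ← Real.sqrt_mul (sq_nonneg c), Finset.mul_sum]
  congr 1
  apply Finset.sum_congr rfl
  intro i _
  simp [mul_pow]

lemma sqnorm_eq_zero {J : ℕ} {v : Fin J → ℝ} (h : sqnorm v = 0) : v = 0 := by
  have h2 : (∑ i, (v i)^2) = 0 := by
    have := sq_sqnorm v; rw [h] at this; simpa using this.symm
  funext i
  have := (Finset.sum_eq_zero_iff_of_nonneg (fun i _ => sq_nonneg (v i))).mp h2 i (Finset.mem_univ i)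
  exact pow_eq_zero_iff (by norm_num) |>.mp this

lemma spec_bddAbove {J : ℕ} (B : Matrix (Fin J) (Fin J) ℝ) :
    BddAbove {c | ∃ v : Fin J → ℝ, sqnorm v ≤ 1 ∧ c = sqnorm (B.mulVec v)} := by
  refine ⟨Real.sqrt (∑ i, ∑ j, (B i j)^2), ?_⟩
  rintro c ⟨v, hv, rfl⟩
  unfold sqnorm
  apply Real.sqrt_le_sqrt
  have hv2 : (∑ j, (v j)^2) ≤ 1 := by
    have := sq_sqnorm v
    nlinarith [sqnorm_nonneg v]
  apply Finset.sum_le_sum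
  intro i _
  calc (B.mulVec v i)^2 = (∑ j, B i j * v j)^2 := by rfl
    _ ≤ (∑ j, (B i j)^2) * (∑ j, (v j)^2) := Finset.sum_mul_sq_le_sq_mul_sq _ _ _
    _ ≤ (∑ j, (B i j)^2) * 1 := by
        apply mul_le_mul_of_nonneg_left hv2 (Finset.sum_nonneg fun j _ => sq_nonneg _)
    _ = ∑ j, (B i j)^2 := mul_one _

lemma le_spec {J : ℕ} (B : Matrix (Fin J) (Fin J) ℝ) (v : Fin J → ℝ) (h : sqnorm v ≤ 1) :
    sqnorm (B.mulVec v) ≤ spec B :=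
  le_csSup (spec_bddAbove B) ⟨v, h, rfl⟩

lemma spec_nonneg {J : ℕ} (B : Matrix (Fin J) (Fin J) ℝ) : 0 ≤ spec B := by
  have := le_spec B 0 (by rw [sqnorm_zero]; norm_num)
  exact le_trans (sqnorm_nonneg _) this

lemma sqnorm_mulVec_le {J : ℕ} (B : Matrix (Fin J) (Fin J) ℝ) (v : Fin J → ℝ) :
    sqnorm (B.mulVec v) ≤ spec B * sqnorm v := by
  rcases eq_or_lt_of_le (sqnorm_nonneg v) with h0 | h0
  · have hv : v = 0 := sqnorm_eq_zero h0.symm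
    subst hv
    simp [Matrix.mulVec_zero, sqnorm_zero]
  · set N := sqnorm v with hN
    have hu : sqnorm (N⁻¹ • v) = 1 := by
      rw [sqnorm_smul, abs_of_pos (inv_pos.mpr h0)]
      field_simp
      exact hN.symm
    have h1 := le_spec B (N⁻¹ • v) (le_of_eq hu)
    rw [Matrix.mulVec_smul, sqnorm_smul, abs_of_pos (inv_pos.mpr h0)] at h1
    calc sqnorm (B.mulVec v) = N * (N⁻¹ * sqnorm (B.mulVec v)) := by field_simp
      _ ≤ N * spec B := by
          apply mul_le_mul_of_nonneg_left h1 (le_of_lt h0)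
      _ = spec B * N := mul_comm _ _

lemma dot_mulVec_symm {J : ℕ} {B : Matrix (Fin J) (Fin J) ℝ} (hB : B.IsHermitian)
    (x y : Fin J → ℝ) : x ⬝ᵥ B *ᵥ y = y ⬝ᵥ B *ᵥ x := by
  have hBt : Bᵀ = B := by
    have := hB; rwa [Matrix.IsHermitian, Matrix.conjTranspose] at this <;> simpa using this
  rw [Matrix.dotProduct_mulVec, ← Matrix.mulVec_transpose, hBt, dotProduct_comm]

lemma psd_cauchy_schwarz {J : ℕ} {B : Matrix (Fin J) (Fin J) ℝ} (hB : B.PosSemidef)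
    (x y : Fin J → ℝ) : (x ⬝ᵥ B *ᵥ y)^2 ≤ (x ⬝ᵥ B *ᵥ x) * (y ⬝ᵥ B *ᵥ y) := by
  have key : ∀ t : ℝ, 0 ≤ (y ⬝ᵥ B *ᵥ y) * (t * t) + (2 * (x ⬝ᵥ B *ᵥ y)) * t + (x ⬝ᵥ B *ᵥ x) := by
    intro t
    have h := hB.dotProduct_mulVec_nonneg (x + t • y)
    have hst : star (x + t • y) = x + t • y := by simp
    rw [hst] at h
    have hexp : (x + t • y) ⬝ᵥ B *ᵥ (x + t • y)
        = (y ⬝ᵥ B *ᵥ y) * (t * t) + (2 * (x ⬝ᵥ B *ᵥ y)) * t + (x ⬝ᵥ B *ᵥ x) := by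
      rw [Matrix.mulVec_add, Matrix.mulVec_smul, dotProduct_add, add_dotProduct,
        add_dotProduct, dotProduct_smul, smul_dotProduct,
        smul_dotProduct, dotProduct_smul,
        dot_mulVec_symm hB.isHermitian y x]
      simp [smul_eq_mul]
      ring
    rw [hexp] at h
    exact h
  have hd := discrim_le_zero key
  rw [discrim] at hd
  nlinarith [hd]

/-- for `A` symmetric positive definite and `D = diag(d)` with
`0 ≤ d i ≤ 1`, the matrix `I − D + DA` is nonsingular and
`‖(I − D + DA)⁻¹ D‖ ≤ ‖A⁻¹‖` in the spectral norm. -/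
theorem stmt6 {J : ℕ} (A : Matrix (Fin J) (Fin J) ℝ) (hA : A.PosDef)
    (d : Fin J → ℝ) (hd : ∀ i, 0 ≤ d i ∧ d i ≤ 1) :
    IsUnit (1 - Matrix.diagonal d + Matrix.diagonal d * A) ∧
    spec ((1 - Matrix.diagonal d + Matrix.diagonal d * A)⁻¹ * Matrix.diagonal d) ≤
      spec A⁻¹ := by
  set D := Matrix.diagonal d with hDdef
  set M := 1 - D + D * A with hMdef
  have hMv : ∀ y : Fin J → ℝ, ∀ i, (M *ᵥ y) i = (1 - d i) * y i + d i * ((A *ᵥ y) i) := by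
    intro y i
    rw [hMdef]
    have hDA : (D * A) *ᵥ y = D *ᵥ (A *ᵥ y) := (Matrix.mulVec_mulVec y D A).symm
    rw [Matrix.add_mulVec, Matrix.sub_mulVec, Matrix.one_mulVec, hDA]
    simp only [Pi.add_apply, Pi.sub_apply]
    rw [hDdef, Matrix.mulVec_diagonal, Matrix.mulVec_diagonal]
    ring
  -- injectivity
  have hker : ∀ y : Fin J → ℝ, M *ᵥ y = 0 → y = 0 := by
    intro y hy
    by_contra hy0
    have hpos := hA.dotProduct_mulVec_pos hy0
    rw [star_trivial] at hpos
    have hneg : y ⬝ᵥ A *ᵥ y ≤ 0 := by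
      have : ∀ i, y i * (A *ᵥ y) i ≤ 0 := by
        intro i
        have heq : (1 - d i) * y i + d i * ((A *ᵥ y) i) = 0 := by
          rw [← hMv y i, hy]; rfl
        rcases (hd i).1.eq_or_lt with h0 | h0
        · rw [← h0] at heq
          have hyi : y i = 0 := by linarith
          simp [hyi]
        · have h2 : (1 - d i) * (y i)^2 + d i * (y i * ((A *ᵥ y) i)) = 0 := by
            linear_combination y i * heq
          nlinarith [h2, mul_nonneg (sub_nonneg.mpr (hd i).2) (sq_nonneg (y i)), h0]
      calc y ⬝ᵥ A *ᵥ y = ∑ i, y i * (A *ᵥ y) i := rfl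
        _ ≤ 0 := Finset.sum_nonpos fun i _ => this i
    linarith
  have hinj : Function.Injective M.mulVec := by
    intro a b hab
    have h0 : M *ᵥ (a - b) = 0 := by
      rw [Matrix.mulVec_sub, hab]; simp
    have := hker _ h0
    exact sub_eq_zero.mp this
  have hU : IsUnit M := Matrix.mulVec_injective_iff_isUnit.mp hinj
  refine ⟨hU, ?_⟩
  have hdetM : IsUnit M.det := (Matrix.isUnit_iff_isUnit_det M).mp hU
  have hdetA : IsUnit A.det := (Matrix.isUnit_iff_isUnit_det A).mp hA.isUnit
  have hMM : M * M⁻¹ = 1 := Matrix.mul_nonsing_inv M hdetM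
  have hB : (A⁻¹).PosSemidef := hA.inv.posSemidef
  apply Real.sSup_le _ (spec_nonneg A⁻¹)
  rintro c ⟨v, hv, rfl⟩
  set y := (M⁻¹ * D) *ᵥ v with hy
  set w := A *ᵥ y with hw
  set N := sqnorm y with hN
  have hNnn : 0 ≤ N := sqnorm_nonneg y
  have hMy : M *ᵥ y = D *ᵥ v := by
    rw [hy, Matrix.mulVec_mulVec, ← Matrix.mul_assoc, hMM, Matrix.one_mul]
  have hcomp : ∀ i, (1 - d i) * y i + d i * w i = d i * v i := by
    intro i
    rw [hw, ← hMv y i, hMy]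
    simp [hDdef, Matrix.mulVec_diagonal]
  have claim : ∀ i, y i * w i ≤ y i * v i := by
    intro i
    have heq := hcomp i
    rcases (hd i).1.eq_or_lt with h0 | h0
    · rw [← h0] at heq
      have hyi : y i = 0 := by linarith
      simp [hyi]
    · have h2 : (1 - d i) * (y i)^2 + d i * (y i * w i) = d i * (y i * v i) := by
        linear_combination y i * heq
      nlinarith [h2, mul_nonneg (sub_nonneg.mpr (hd i).2) (sq_nonneg (y i)), h0]
  have h1 : y ⬝ᵥ w ≤ N := by
    calc y ⬝ᵥ w = ∑ i, y i * w i := rfl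
      _ ≤ ∑ i, y i * v i := Finset.sum_le_sum fun i _ => claim i
      _ ≤ sqnorm y * sqnorm v := dot_le_sqnorm y v
      _ ≤ N * 1 := by apply mul_le_mul_of_nonneg_left hv hNnn
      _ = N := mul_one N
  have hBw : A⁻¹ *ᵥ w = y := by
    rw [hw, Matrix.mulVec_mulVec, Matrix.nonsing_inv_mul A hdetA, Matrix.one_mulVec]
  have hyBw : y ⬝ᵥ A⁻¹ *ᵥ w = N^2 := by
    rw [hBw, sq_sqnorm]
    simp [dotProduct, pow_two]
  have hwBw : w ⬝ᵥ A⁻¹ *ᵥ w ≤ N := by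
    rw [hBw, dotProduct_comm]; exact h1
  have hwBwnn : 0 ≤ w ⬝ᵥ A⁻¹ *ᵥ w := by
    have := hB.dotProduct_mulVec_nonneg w
    rwa [star_trivial] at this
  have hyBynn : 0 ≤ y ⬝ᵥ A⁻¹ *ᵥ y := by
    have := hB.dotProduct_mulVec_nonneg y
    rwa [star_trivial] at this
  have hyBy : y ⬝ᵥ A⁻¹ *ᵥ y ≤ spec A⁻¹ * N^2 := by
    calc y ⬝ᵥ A⁻¹ *ᵥ y = ∑ i, y i * (A⁻¹ *ᵥ y) i := rfl
      _ ≤ sqnorm y * sqnorm (A⁻¹ *ᵥ y) := dot_le_sqnorm _ _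
      _ ≤ N * (spec A⁻¹ * N) := by
          apply mul_le_mul_of_nonneg_left (sqnorm_mulVec_le A⁻¹ y) hNnn
      _ = spec A⁻¹ * N^2 := by ring
  have cs := psd_cauchy_schwarz hB y w
  rw [hyBw] at cs
  have hspec := spec_nonneg A⁻¹
  have key : N^4 ≤ spec A⁻¹ * N^3 := by
    have hprod : (y ⬝ᵥ A⁻¹ *ᵥ y) * (w ⬝ᵥ A⁻¹ *ᵥ w) ≤ (spec A⁻¹ * N^2) * N := by
      apply mul_le_mul hyBy hwBw hwBwnn
      positivity
    nlinarith [cs]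
  rcases eq_or_lt_of_le hNnn with h0 | h0
  · linarith
  · nlinarith [pow_pos h0 3]
end

section
/- Convexity of the solution set: If M ∈ ℝ^{n×n} is positive semidefinite (vᵀMv ≥ 0 for all v) and q ∈ ℝ^n, then the solution set SOL(M,q) = {v : v ≥ 0, Mv + q ≥ 0, vᵀ(Mv+q) = 0} is convex. -/
open Matrix

/-- for a positive semidefinite `M` the solution set
`SOL(M,q) = {v : v ≥ 0, Mv + q ≥ 0, vᵀ(Mv+q) = 0}` is convex. -/
theorem stmt11 {n : ℕ} (M : Matrix (Fin n) (Fin n) ℝ) (q : Fin n → ℝ)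
    (hM : ∀ v : Fin n → ℝ, 0 ≤ v ⬝ᵥ M.mulVec v) :
    Convex ℝ {v : Fin n → ℝ |
      (∀ i, 0 ≤ v i) ∧ (∀ i, 0 ≤ (M.mulVec v + q) i) ∧ v ⬝ᵥ (M.mulVec v + q) = 0} := by
  rintro u ⟨hu1, hu2, hu3⟩ v ⟨hv1, hv2, hv3⟩ a b ha hb hab
  have h1 : 0 ≤ u ⬝ᵥ (M.mulVec v + q) :=
    Finset.sum_nonneg fun i _ => mul_nonneg (hu1 i) (hv2 i)
  have h2 : 0 ≤ v ⬝ᵥ (M.mulVec u + q) :=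
    Finset.sum_nonneg fun i _ => mul_nonneg (hv1 i) (hu2 i)
  have hpsd := hM (u - v)
  rw [Matrix.mulVec_sub, sub_dotProduct, dotProduct_sub,
    dotProduct_sub] at hpsd
  rw [dotProduct_add] at hu3 hv3 h1 h2
  have k1 : u ⬝ᵥ M.mulVec v + u ⬝ᵥ q = 0 := by linarith
  have k2 : v ⬝ᵥ M.mulVec u + v ⬝ᵥ q = 0 := by linarith
  refine ⟨fun i => add_nonneg (mul_nonneg ha (hu1 i)) (mul_nonneg hb (hv1 i)), ?_, ?_⟩
  · intro i
    have e1 := hu2 i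
    have e2 := hv2 i
    simp only [Pi.add_apply, Matrix.mulVec_add, Matrix.mulVec_smul, Pi.smul_apply,
      smul_eq_mul] at e1 e2 ⊢
    have hq : (a + b) * q i = q i := by rw [hab, one_mul]
    linarith [mul_nonneg ha e1, mul_nonneg hb e2]
  · simp only [Matrix.mulVec_add, Matrix.mulVec_smul, dotProduct_add,
      add_dotProduct, smul_dotProduct, dotProduct_smul,
      smul_eq_mul]
    linear_combination a ^ 2 * hu3 + a * b * k2 + b ^ 2 * hv3 + a * b * k1 -
      (a * (u ⬝ᵥ q) + b * (v ⬝ᵥ q)) * hab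
end

section
/- Lipschitz dependence of box-constrained QP minimizers on the box upper bound: Let A ∈ ℝ^{J×J} be symmetric positive definite and ρ ∈ ℝ^J. For x ≥ 0 let y(x) denote the unique minimizer of (1/2)yᵀAy + ρᵀy over [0,x]. Then there exists a constant L (depending only on A) such that ‖y(x) − y(x')‖ ≤ L‖x − x'‖ for all x, x' ≥ 0. -/
open Matrix

section Helpers

variable {J : ℕ}

private lemma qp_expand (A : Matrix (Fin J) (Fin J) ℝ) (hsym : A.IsSymm) (y u : Fin J → ℝ) :
    (y + u) ⬝ᵥ A.mulVec (y + u) = y ⬝ᵥ A.mulVec y + 2 * (u ⬝ᵥ A.mulVec y) + u ⬝ᵥ A.mulVec u := by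
  have h : y ⬝ᵥ A.mulVec u = u ⬝ᵥ A.mulVec y := by
    rw [Matrix.dotProduct_mulVec, ← Matrix.mulVec_transpose, hsym.eq, dotProduct_comm]
  rw [Matrix.mulVec_add, dotProduct_add, add_dotProduct, add_dotProduct, h]
  ring

/-- KKT conditions for a minimizer of the box-constrained QP. -/
private lemma qp_kkt (A : Matrix (Fin J) (Fin J) ℝ) (hA : A.PosDef) (ρ x y : Fin J → ℝ)
    (hy : ∀ i, 0 ≤ y i ∧ y i ≤ x i)
    (hmin : ∀ z : Fin J → ℝ, (∀ i, 0 ≤ z i ∧ z i ≤ x i) →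
      (1/2) * (y ⬝ᵥ A.mulVec y) + ρ ⬝ᵥ y ≤ (1/2) * (z ⬝ᵥ A.mulVec z) + ρ ⬝ᵥ z)
    (i : Fin J) :
    (y i < x i → 0 ≤ (A.mulVec y + ρ) i) ∧ (0 < y i → (A.mulVec y + ρ) i ≤ 0) := by
  have hsym : A.IsSymm := by
    rw [Matrix.IsSymm, ← Matrix.conjTranspose_eq_transpose_of_trivial]; exact hA.1
  have hAii : 0 < A i i := by
    have := hA.dotProduct_mulVec_pos (x := Pi.single i 1) (by simp [ne_eq, funext_iff]; exact ⟨i, by simp⟩)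
    simpa [Matrix.mulVec_single, single_dotProduct] using this
  set g : Fin J → ℝ := A.mulVec y + ρ with hg
  have key : ∀ t : ℝ, 0 ≤ y i + t → y i + t ≤ x i →
      0 ≤ t * g i + t^2 / 2 * A i i := by
    intro t ht1 ht2
    set u : Fin J → ℝ := t • (Pi.single i 1 : Fin J → ℝ) with hu
    have hfeas : ∀ j, 0 ≤ (y + u) j ∧ (y + u) j ≤ x j := by
      intro j
      by_cases hji : j = i
      · subst hji; simpa [hu, Pi.single_eq_same] using ⟨ht1, ht2⟩
      · simpa [hu, Pi.single_eq_of_ne hji] using hy j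
    have h1 := hmin (y + u) hfeas
    have h2 : u ⬝ᵥ A.mulVec y = t * (A.mulVec y) i := by
      simp [hu, smul_dotProduct, single_dotProduct, smul_eq_mul]
    have h3 : u ⬝ᵥ A.mulVec u = t^2 * A i i := by
      simp [hu, Matrix.mulVec_smul, Matrix.mulVec_single, smul_dotProduct,
        dotProduct_smul, single_dotProduct, smul_eq_mul]
      ring
    have h4 : ρ ⬝ᵥ (y + u) = ρ ⬝ᵥ y + t * ρ i := by
      simp [hu, dotProduct_add, dotProduct_smul, dotProduct_single,
        smul_eq_mul, mul_comm]
    rw [qp_expand A hsym y u, h4] at h1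
    have : 0 ≤ t * ((A.mulVec y) i + ρ i) + t^2/2 * A i i := by nlinarith [h1, h2, h3]
    simpa [hg, Pi.add_apply] using this
  constructor
  · intro hlt
    by_contra hneg
    push_neg at hneg
    set t : ℝ := min (x i - y i) (-(g i) / A i i) with ht
    have ht0 : 0 < t := by
      apply lt_min (by linarith)
      exact div_pos (by linarith) hAii
    have htc : t ≤ x i - y i := min_le_left _ _
    have htg : t * A i i ≤ -(g i) := by
      have := min_le_right (x i - y i) (-(g i) / A i i)
      calc t * A i i ≤ (-(g i)/A i i) * A i i := by nlinarith
        _ = -(g i) := by field_simp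
    have := key t (by linarith [(hy i).1]) (by linarith)
    nlinarith
  · intro hpos
    by_contra hneg
    push_neg at hneg
    set t : ℝ := min (y i) (g i / A i i) with ht
    have ht0 : 0 < t := lt_min hpos (div_pos hneg hAii)
    have htc : t ≤ y i := min_le_left _ _
    have htg : t * A i i ≤ g i := by
      have := min_le_right (y i) (g i / A i i)
      calc t * A i i ≤ (g i/A i i) * A i i := by nlinarith
        _ = g i := by field_simp
    have := key (-t) (by linarith) (by linarith [(hy i).2])
    nlinarith

private lemma clamp_abs (a a' b b' : ℝ) :
    |max 0 (min a b) - max 0 (min a' b')| ≤ max |a - a'| |b - b'| :=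
  le_trans (by simpa using abs_max_sub_max_le_max 0 (min a b) 0 (min a' b'))
    (by simpa using (max_le_max (le_refl (0:ℝ)) (abs_min_sub_min_le_max a b a' b') : _))

/-- fixed-point characterization of the minimizer -/
private lemma qp_fixed (γ : ℝ) (hγ : 0 < γ) (x y g : Fin J → ℝ)
    (hy : ∀ i, 0 ≤ y i ∧ y i ≤ x i)
    (hk : ∀ i, (y i < x i → 0 ≤ g i) ∧ (0 < y i → g i ≤ 0)) (i : Fin J) :
    y i = max 0 (min (y i - γ * g i) (x i)) := by
  obtain ⟨h0, hx⟩ := hy i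
  rcases lt_trichotomy (g i) 0 with hgi | hgi | hgi
  · have hyx : y i = x i := by
      by_contra h
      have := (hk i).1 (lt_of_le_of_ne hx h)
      linarith
    have : min (y i - γ * g i) (x i) = x i := min_eq_right (by nlinarith)
    rw [this, max_eq_right (by linarith), hyx]
  · simp [hgi, min_eq_left hx, max_eq_right h0]
  · have hy0 : y i = 0 := by
      by_contra h
      have := (hk i).2 (lt_of_le_of_ne h0 (Ne.symm h))
      linarith
    rw [hy0]
    have hm : min (0 - γ * g i) (x i) ≤ 0 := le_trans (min_le_left _ _) (by nlinarith)
    rw [max_eq_left hm]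

/-- strong convexity constant -/
private lemma exists_mu (A : Matrix (Fin J) (Fin J) ℝ) (hA : A.PosDef) :
    ∃ μ : ℝ, 0 < μ ∧ ∀ v : Fin J → ℝ, μ * (∑ i, (v i)^2) ≤ v ⬝ᵥ A.mulVec v := by
  rcases Nat.eq_zero_or_pos J with hJ | hJ
  · subst hJ
    refine ⟨1, one_pos, fun v => ?_⟩
    simp [dotProduct]
  · set f : (Fin J → ℝ) → ℝ := fun v => v ⬝ᵥ A.mulVec v with hf
    have hfc : Continuous f := by
      have : f = fun v => ∑ i, v i * ∑ j, A i j * v j := rfl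
      rw [this]
      exact continuous_finset_sum _ fun i _ =>
        (continuous_apply i).mul (continuous_finset_sum _ fun j _ =>
          continuous_const.mul (continuous_apply j))
    set S : Set (Fin J → ℝ) := {v | ∑ i, (v i)^2 = 1} with hS
    have hNc : Continuous fun v : Fin J → ℝ => ∑ i, (v i)^2 :=
      continuous_finset_sum _ fun i _ => (continuous_apply i).pow 2
    have hclosed : IsClosed S := isClosed_eq hNc continuous_const
    have hsub : S ⊆ Metric.closedBall 0 1 := by
      intro v hv
      rw [Metric.mem_closedBall, dist_zero_right]
      rw [pi_norm_le_iff_of_nonneg zero_le_one]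
      intro i
      have h1 : (v i)^2 ≤ 1 := hv ▸ Finset.single_le_sum (fun j _ => sq_nonneg (v j)) (Finset.mem_univ i)
      rw [Real.norm_eq_abs]
      nlinarith [abs_nonneg (v i), sq_abs (v i)]
    have hScomp : IsCompact S := (isCompact_closedBall (0 : Fin J → ℝ) 1).of_isClosed_subset hclosed hsub
    have hne : S.Nonempty := by
      refine ⟨(Pi.single ⟨0, hJ⟩ 1 : Fin J → ℝ), ?_⟩
      simp [hS, Pi.single_apply]
    obtain ⟨w, hwS, hw⟩ := hScomp.exists_isMinOn hne hfc.continuousOn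
    have hw0 : w ≠ 0 := by
      intro h
      rw [hS] at hwS
      simp [h] at hwS
    have hμpos : 0 < f w := by have := hA.dotProduct_mulVec_pos hw0; rwa [star_trivial] at this
    refine ⟨f w, hμpos, fun v => ?_⟩
    by_cases hv : v = 0
    · simp [hv, hf, Matrix.mulVec_zero, dotProduct_zero]
    · set N : ℝ := ∑ i, (v i)^2 with hN
      have hNpos : 0 < N := by
        have : ∃ i, v i ≠ 0 := by
          by_contra h
          push_neg at h
          exact hv (funext fun i => h i)
        obtain ⟨i, hi⟩ := this
        have h1 : 0 < (v i)^2 := lt_of_le_of_ne (sq_nonneg _) (Ne.symm (pow_ne_zero 2 hi))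
        exact lt_of_lt_of_le h1 (Finset.single_le_sum (fun j _ => sq_nonneg (v j)) (Finset.mem_univ i))
      set s : ℝ := Real.sqrt N with hs
      have hspos : 0 < s := Real.sqrt_pos.2 hNpos
      have hs2 : s^2 = N := Real.sq_sqrt hNpos.le
      have hmem : s⁻¹ • v ∈ S := by
        rw [hS]
        simp only [Set.mem_setOf_eq, Pi.smul_apply, smul_eq_mul, mul_pow]
        rw [← Finset.mul_sum, ← hN]
        field_simp [hs2]
        exact hs2.symm
      have hfs : f (s⁻¹ • v) = s⁻¹ * (s⁻¹ * f v) := by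
        rw [hf]
        simp [Matrix.mulVec_smul, smul_dotProduct, dotProduct_smul, smul_eq_mul]
      have hle : f w ≤ f (s⁻¹ • v) := hw hmem
      rw [hfs] at hle
      have h2 : f w * s^2 ≤ f v := by
        have hs' : (0:ℝ) < s^2 := by positivity
        calc f w * s^2 ≤ (s⁻¹ * (s⁻¹ * f v)) * s^2 := by nlinarith
          _ = f v := by
              have hsne : s ≠ 0 := ne_of_gt hspos
              field_simp
              try ring
              try exact Or.inl trivial
      rw [hs2] at h2
      exact h2

private lemma sq_le_of_abs_le_max (d a b : ℝ) (h : |d| ≤ max |a| |b|) : d^2 ≤ a^2 + b^2 := by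
  have h2 : |d|^2 ≤ (max |a| |b|)^2 := pow_le_pow_left₀ (abs_nonneg d) h 2
  have h3 : (max |a| |b|)^2 ≤ a^2 + b^2 := by
    rcases max_cases |a| |b| with ⟨he, _⟩ | ⟨he, _⟩ <;> rw [he] <;>
      nlinarith [sq_abs a, sq_abs b, sq_nonneg a, sq_nonneg b]
  calc d^2 = |d|^2 := (sq_abs d).symm
    _ ≤ _ := le_trans h2 h3

end Helpers

/-- Lipschitz dependence of the box-constrained QP minimizer on the box
upper bound: there is a constant `L` (depending only on `A`, `ρ`) such that any
minimizers `y`, `y'` of `(1/2)yᵀAy + ρᵀy` over `[0,x]` and `[0,x']` respectively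
satisfy `‖y − y'‖ ≤ L ‖x − x'‖`. -/
theorem stmt17 {J : ℕ} (A : Matrix (Fin J) (Fin J) ℝ) (hA : A.PosDef) (ρ : Fin J → ℝ) :
    ∃ L : ℝ, ∀ x x' y y' : Fin J → ℝ,
      (∀ i, 0 ≤ x i) → (∀ i, 0 ≤ x' i) →
      (∀ i, 0 ≤ y i ∧ y i ≤ x i) →
      (∀ z : Fin J → ℝ, (∀ i, 0 ≤ z i ∧ z i ≤ x i) →
        (1/2) * (y ⬝ᵥ A.mulVec y) + ρ ⬝ᵥ y ≤ (1/2) * (z ⬝ᵥ A.mulVec z) + ρ ⬝ᵥ z) →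
      (∀ i, 0 ≤ y' i ∧ y' i ≤ x' i) →
      (∀ z : Fin J → ℝ, (∀ i, 0 ≤ z i ∧ z i ≤ x' i) →
        (1/2) * (y' ⬝ᵥ A.mulVec y') + ρ ⬝ᵥ y' ≤ (1/2) * (z ⬝ᵥ A.mulVec z) + ρ ⬝ᵥ z) →
      sqnorm (y - y') ≤ L * sqnorm (x - x') := by
  rcases Nat.eq_zero_or_pos J with hJ | hJ
  · subst hJ
    refine ⟨0, fun x x' y y' _ _ _ _ _ _ => ?_⟩
    simp [sqnorm]
  obtain ⟨μ, hμ, hmu⟩ := exists_mu A hA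
  set CC : ℝ := ∑ i, ∑ j, (A i j)^2 with hCC
  have hCCpos : 0 < CC := by
    set i0 : Fin J := ⟨0, hJ⟩
    have hAii : 0 < A i0 i0 := by
      have := hA.dotProduct_mulVec_pos (x := Pi.single i0 1) (by simp [ne_eq, funext_iff]; exact ⟨i0, by simp⟩)
      simpa [Matrix.mulVec_single, single_dotProduct] using this
    have h1 : (A i0 i0)^2 ≤ ∑ j, (A i0 j)^2 :=
      Finset.single_le_sum (f := fun j => (A i0 j)^2) (fun j _ => sq_nonneg _) (Finset.mem_univ i0)
    have h2 : ∑ j, (A i0 j)^2 ≤ CC :=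
      Finset.single_le_sum (f := fun i => ∑ j, (A i j)^2)
        (fun i _ => Finset.sum_nonneg fun j _ => sq_nonneg _) (Finset.mem_univ i0)
    nlinarith
  clear_value CC
  set γ : ℝ := μ / CC with hγdef
  clear_value γ
  have hγ : 0 < γ := by rw [hγdef]; exact div_pos hμ hCCpos
  refine ⟨Real.sqrt (CC / μ^2), fun x x' y y' hx hx' hy hminy hy' hminy' => ?_⟩
  set g : Fin J → ℝ := A.mulVec y + ρ with hgdef
  set g' : Fin J → ℝ := A.mulVec y' + ρ with hg'def
  have hk : ∀ i, (y i < x i → 0 ≤ g i) ∧ (0 < y i → g i ≤ 0) :=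
    fun i => qp_kkt A hA ρ x y hy hminy i
  have hk' : ∀ i, (y' i < x' i → 0 ≤ g' i) ∧ (0 < y' i → g' i ≤ 0) :=
    fun i => qp_kkt A hA ρ x' y' hy' hminy' i
  have hfixy := qp_fixed γ hγ x y g hy hk
  have hfixy' := qp_fixed γ hγ x' y' g' hy' hk'
  set d : Fin J → ℝ := fun i => y i - y' i with hd
  set Ad : Fin J → ℝ := A.mulVec d with hAd
  have hdapp : ∀ i, d i = y i - y' i := fun i => rfl
  have hAdapp : ∀ i, Ad i = ∑ j, A i j * d j := fun i => rfl
  have hdAd : ∑ i, d i * Ad i = d ⬝ᵥ A.mulVec d := rfl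
  have hmuNd' : μ * (∑ i, (d i)^2) ≤ ∑ i, d i * Ad i := by rw [hdAd]; exact hmu d
  have hgd : ∀ i, g i - g' i = Ad i := by
    intro i
    have : d = y - y' := by funext j; simp [hd]
    rw [hAd, this, Matrix.mulVec_sub]
    simp [hgdef, hg'def]
  clear_value d Ad g g'
  -- coordinatewise estimate
  have hcoord : ∀ i, (d i)^2 ≤ (d i - γ * Ad i)^2 + (x i - x' i)^2 := by
    intro i
    have h1 : |y i - y' i| ≤ max |(y i - γ * g i) - (y' i - γ * g' i)| |x i - x' i| := by
      calc |y i - y' i|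
          = |max 0 (min (y i - γ * g i) (x i)) - max 0 (min (y' i - γ * g' i) (x' i))| := by
            rw [← hfixy i, ← hfixy' i]
        _ ≤ _ := clamp_abs _ _ _ _
    have h2 : (y i - γ * g i) - (y' i - γ * g' i) = d i - γ * Ad i := by
      have h3 : γ * (g i - g' i) = γ * Ad i := by rw [hgd i]
      have h4 : d i = y i - y' i := hdapp i
      nlinarith [h3, h4]
    rw [h2, ← hdapp i] at h1
    exact sq_le_of_abs_le_max (d i) (d i - γ * Ad i) (x i - x' i) (by simpa using h1)
  set Nd : ℝ := ∑ i, (d i)^2 with hNd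
  set NX : ℝ := ∑ i, (x i - x' i)^2 with hNX
  clear_value Nd NX
  have hsum1 : Nd ≤ ∑ i, (d i - γ * Ad i)^2 + NX := by
    rw [hNd, hNX]
    calc ∑ i, (d i)^2 ≤ ∑ i, ((d i - γ * Ad i)^2 + (x i - x' i)^2) :=
          Finset.sum_le_sum fun i _ => hcoord i
      _ = _ := by rw [Finset.sum_add_distrib]
  have hexpand : ∑ i, (d i - γ * Ad i)^2
      = Nd - 2 * γ * (∑ i, d i * Ad i) + γ^2 * ∑ i, (Ad i)^2 := by
    rw [hNd]
    have h : ∀ i ∈ Finset.univ, (d i - γ * Ad i)^2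
        = (d i)^2 - 2 * γ * (d i * Ad i) + γ^2 * (Ad i)^2 := fun i _ => by ring
    rw [Finset.sum_congr rfl h, Finset.sum_add_distrib, Finset.sum_sub_distrib,
      ← Finset.mul_sum, ← Finset.mul_sum]
  have hmuNd : μ * Nd ≤ ∑ i, d i * Ad i := hmuNd'
  have hCS : ∑ i, (Ad i)^2 ≤ CC * Nd := by
    have h : ∀ i ∈ Finset.univ, (Ad i)^2 ≤ (∑ j, (A i j)^2) * Nd := by
      intro i _
      rw [hAdapp i, hNd]
      exact Finset.sum_mul_sq_le_sq_mul_sq Finset.univ _ _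
    calc ∑ i, (Ad i)^2 ≤ ∑ i, (∑ j, (A i j)^2) * Nd := Finset.sum_le_sum h
      _ = CC * Nd := by rw [← Finset.sum_mul, ← hCC]
  have hNd0 : 0 ≤ Nd := by rw [hNd]; exact Finset.sum_nonneg fun i _ => sq_nonneg _
  have hNX0 : 0 ≤ NX := by rw [hNX]; exact Finset.sum_nonneg fun i _ => sq_nonneg _
  -- combine: (μ^2/CC) * Nd ≤ NX
  have hγCC : γ * CC = μ := by rw [hγdef]; field_simp
  have hmain : γ * μ * Nd ≤ NX := by
    have h1 : ∑ i, (d i - γ * Ad i)^2 ≤ Nd - 2 * γ * (μ * Nd) + γ^2 * (CC * Nd) := by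
      rw [hexpand]
      have := mul_le_mul_of_nonneg_left hmuNd (by positivity : (0:ℝ) ≤ 2 * γ)
      have h2 := mul_le_mul_of_nonneg_left hCS (by positivity : (0:ℝ) ≤ γ^2)
      linarith
    have h3 : Nd - 2 * γ * (μ * Nd) + γ^2 * (CC * Nd) = Nd - γ * μ * Nd := by
      have : γ^2 * (CC * Nd) = γ * μ * Nd := by
        calc γ^2 * (CC * Nd) = (γ * CC) * (γ * Nd) := by ring
          _ = μ * (γ * Nd) := by rw [hγCC]
          _ = γ * μ * Nd := by ring
      linarith
    linarith [hsum1, h1, h3.le, h3.ge]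
  have hfinal : Nd ≤ (CC / μ^2) * NX := by
    have hprod : (CC / μ^2) * (γ * μ) = 1 := by
      rw [hγdef]; field_simp
    have hpos : 0 < CC / μ^2 := by positivity
    calc Nd = (CC / μ^2) * (γ * μ) * Nd := by rw [hprod]; ring
      _ = (CC / μ^2) * (γ * μ * Nd) := by ring
      _ ≤ (CC / μ^2) * NX := mul_le_mul_of_nonneg_left hmain hpos.le
  -- conclude with square roots
  have hsq1 : sqnorm (y - y') = Real.sqrt Nd := by
    rw [sqnorm, hNd]
    congr 1
    all_goals exact Finset.sum_congr rfl fun i _ => by simp [hd]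
  have hsq2 : sqnorm (x - x') = Real.sqrt NX := by
    rw [sqnorm, hNX]
    congr 1
    all_goals exact Finset.sum_congr rfl fun i _ => by simp
  rw [hsq1, hsq2]
  calc Real.sqrt Nd ≤ Real.sqrt ((CC / μ^2) * NX) := Real.sqrt_le_sqrt hfinal
    _ = Real.sqrt (CC / μ^2) * Real.sqrt NX := Real.sqrt_mul (by positivity) NX
end
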